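/- arXiv:1605.02885 — 5 statements merged into one kernel-verified Lean document; each statement's English description precedes it below -/
import Mathlib

section
/- Fix n ≥ 1 and 1 ≤ i ≤ n, and fix positive reals ℓᵢ,…,ℓₙ with Sᵢ = ∑_{j=i}^n ℓⱼ and Hᵢ the entropy of (ℓᵢ,…,ℓₙ). Among all lists M = (x₁,…,x_{i-1}, ℓᵢ,…,ℓₙ) with x₁,…,x_{i-1} > 0, the entropy H(M) is maximized by taking x₁ = ⋯ = x_{i-1} = Sᵢ / e^{Hᵢ}. -/
open Finset

noncomputable def pentropy {ι : Type*} [Fintype ι] (ℓ : ι → ℝ) : ℝ :=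
  -∑ i, (ℓ i / ∑ j, ℓ j) * Real.log (ℓ i / ∑ j, ℓ j)

lemma gibbs {ι : Type*} [Fintype ι] (p q : ι → ℝ)
    (hp : ∀ i, 0 < p i) (hq : ∀ i, 0 < q i)
    (hpq : ∑ i, p i = ∑ i, q i) :
    -∑ i, p i * Real.log (p i) ≤ -∑ i, p i * Real.log (q i) := by
  have h1 : ∀ i ∈ univ, p i * Real.log (q i) - p i * Real.log (p i) ≤ q i - p i := by
    intro i _
    have hlog := Real.log_le_sub_one_of_pos (x := q i / p i) (div_pos (hq i) (hp i))
    rw [Real.log_div (hq i).ne' (hp i).ne'] at hlog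
    have h2 := mul_le_mul_of_nonneg_left hlog (hp i).le
    have h3 : p i * (q i / p i) = q i := mul_div_cancel₀ _ (hp i).ne'
    nlinarith
  have h4 := Finset.sum_le_sum h1
  rw [Finset.sum_sub_distrib, Finset.sum_sub_distrib, hpq] at h4
  linarith

/-- `m` plays the role of `i-1` (number of free bars) and `ℓ : Fin k → ℝ`
is the fixed tail `(ℓᵢ,…,ℓₙ)`, nonempty since `i ≤ n`. -/
theorem entropy_max_at_geometric_mean (m k : ℕ) (hk : 0 < k)
    (ℓ : Fin k → ℝ) (hℓ : ∀ j, 0 < ℓ j)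
    (x : Fin m → ℝ) (hx : ∀ j, 0 < x j) :
    pentropy (Sum.elim x ℓ) ≤
      pentropy (Sum.elim (fun _ : Fin m => (∑ j, ℓ j) / Real.exp (pentropy ℓ)) ℓ) := by
  have : Nonempty (Fin k) := ⟨⟨0, hk⟩⟩
  set S := ∑ j, ℓ j with hSdef
  have hS : 0 < S := Finset.sum_pos (fun j _ => hℓ j) univ_nonempty
  set A := ∑ j, ℓ j * Real.log (ℓ j) with hAdef
  have hH : pentropy ℓ = Real.log S - A / S := by
    have hterm : ∀ j ∈ univ, (ℓ j / S) * Real.log (ℓ j / S)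
        = ℓ j * Real.log (ℓ j) / S - ℓ j * Real.log S / S := by
      intro j _
      rw [Real.log_div (hℓ j).ne' hS.ne']
      ring
    rw [pentropy, ← hSdef, Finset.sum_congr rfl hterm, Finset.sum_sub_distrib,
      ← Finset.sum_div, ← Finset.sum_div, ← Finset.sum_mul, ← hAdef, ← hSdef]
    field_simp
    ring
  set t := S / Real.exp (pentropy ℓ) with htdef
  have ht : 0 < t := div_pos hS (Real.exp_pos _)
  have hlt : Real.log t = A / S := by
    rw [htdef, Real.log_div hS.ne' (Real.exp_ne_zero _), Real.log_exp, hH]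
    ring
  set T2 := m * t + S with hT2def
  have hT2 : 0 < T2 := by positivity
  -- the key computation, for any positive `y` on the free slots
  have key : ∀ y : Fin m → ℝ,
      ∑ i, (Sum.elim y ℓ i / (∑ j, y j + S)) * Real.log (Sum.elim (fun _ : Fin m => t) ℓ i / T2)
        = ((∑ j, y j) * (A / S - Real.log T2) + (A - S * Real.log T2)) / (∑ j, y j + S) := by
    intro y
    rw [Fintype.sum_sum_type]
    have h1 : ∀ j ∈ (univ : Finset (Fin m)),
        (Sum.elim y ℓ (Sum.inl j) / (∑ j, y j + S)) * Real.log (Sum.elim (fun _ : Fin m => t) ℓ (Sum.inl j) / T2)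
        = y j * (A / S - Real.log T2) / (∑ j, y j + S) := by
      intro j _
      simp only [Sum.elim_inl]
      rw [Real.log_div ht.ne' hT2.ne', hlt]
      ring
    have h2 : ∀ i ∈ (univ : Finset (Fin k)),
        (Sum.elim y ℓ (Sum.inr i) / (∑ j, y j + S)) * Real.log (Sum.elim (fun _ : Fin m => t) ℓ (Sum.inr i) / T2)
        = (ℓ i * Real.log (ℓ i) - ℓ i * Real.log T2) / (∑ j, y j + S) := by
      intro i _
      simp only [Sum.elim_inr]
      rw [Real.log_div (hℓ i).ne' hT2.ne']
      ring
    rw [Finset.sum_congr rfl h1, Finset.sum_congr rfl h2, ← Finset.sum_div, ← Finset.sum_div,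
      ← Finset.sum_mul, Finset.sum_sub_distrib, ← Finset.sum_mul, ← hAdef, ← hSdef]
    ring
  -- sums
  have hsum1 : ∑ i, Sum.elim x ℓ i = ∑ j, x j + S := by
    rw [Fintype.sum_sum_type]; simp [hSdef]
  have hsum2 : ∑ i, Sum.elim (fun _ : Fin m => t) ℓ i = T2 := by
    rw [Fintype.sum_sum_type]
    simp [hT2def, hSdef, Finset.sum_const, mul_comm]
  have hT1 : 0 < ∑ j, x j + S := by
    rcases Nat.eq_zero_or_pos m with hm | hm
    · subst hm; simpa using hS
    · have : Nonempty (Fin m) := ⟨⟨0, hm⟩⟩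
      have : 0 < ∑ j, x j := Finset.sum_pos (fun j _ => hx j) univ_nonempty
      linarith
  set T1 := ∑ j, x j + S with hT1def
  have hppos : ∀ i, 0 < Sum.elim x ℓ i / T1 := by
    intro i
    apply div_pos _ hT1
    cases i with
    | inl j => simpa using hx j
    | inr i => simpa using hℓ i
  have hqpos : ∀ i, 0 < Sum.elim (fun _ : Fin m => t) ℓ i / T2 := by
    intro i
    apply div_pos _ hT2
    cases i with
    | inl j => simpa using ht
    | inr i => simpa using hℓ i
  have hpsum : ∑ i, Sum.elim x ℓ i / T1 = 1 := by
    rw [← Finset.sum_div, hsum1, div_self hT1.ne']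
  have hqsum : ∑ i, Sum.elim (fun _ : Fin m => t) ℓ i / T2 = 1 := by
    rw [← Finset.sum_div, hsum2, div_self hT2.ne']
  have hgibbs := gibbs (fun i => Sum.elim x ℓ i / T1) (fun i => Sum.elim (fun _ : Fin m => t) ℓ i / T2)
    hppos hqpos (by rw [hpsum, hqsum])
  have e1 : pentropy (Sum.elim x ℓ) = -∑ i, (Sum.elim x ℓ i / T1) * Real.log (Sum.elim x ℓ i / T1) := by
    rw [pentropy, hsum1]
  have e2 : pentropy (Sum.elim (fun _ : Fin m => t) ℓ)
      = -∑ i, (Sum.elim (fun _ : Fin m => t) ℓ i / T2) * Real.log (Sum.elim (fun _ : Fin m => t) ℓ i / T2) := by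
    rw [pentropy, hsum2]
  have hkx := key x
  have hkt := key (fun _ : Fin m => t)
  have hsumt : ∑ _j : Fin m, t = m * t := by
    simp [Finset.sum_const, mul_comm]
  rw [hsumt, ← hT2def] at hkt
  rw [e1, e2]
  calc -∑ i, (Sum.elim x ℓ i / T1) * Real.log (Sum.elim x ℓ i / T1)
      ≤ -∑ i, (Sum.elim x ℓ i / T1) * Real.log (Sum.elim (fun _ : Fin m => t) ℓ i / T2) := hgibbs
    _ = -∑ i, (Sum.elim (fun _ : Fin m => t) ℓ i / T2) * Real.log (Sum.elim (fun _ : Fin m => t) ℓ i / T2) := by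
        rw [hkx, hkt, hT2def]
        have h1 : T1 ≠ 0 := hT1.ne'
        have h2 : T2 ≠ 0 := hT2.ne'
        rw [hT1def] at h1
        rw [hT2def] at h2
        field_simp
end

section
/- Let ℓ₁ ≥ ℓ₂ ≥ ⋯ ≥ ℓₙ > 0, and for each i let L'(i) be the list obtained by replacing ℓ₁,…,ℓ_{i-1} with i−1 copies of Sᵢ/e^{Hᵢ}, where Sᵢ = ∑_{j=i}^n ℓⱼ and Hᵢ is the entropy of (ℓᵢ,…,ℓₙ). Then the entropy of the original list L satisfies H(L) ≤ H(L'(i)) for every i. -/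
open Finset

/-- Persistent entropy of the bars `f t` for `t` in the index set `s`. -/
noncomputable def pentropyOn (s : Finset ℕ) (f : ℕ → ℝ) : ℝ :=
  -∑ i ∈ s, (f i / ∑ j ∈ s, f j) * Real.log (f i / ∑ j ∈ s, f j)

/-- Log-sum (Gibbs) inequality. -/
lemma gibbs_aux (s : Finset ℕ) (f g : ℕ → ℝ) (hf : ∀ t ∈ s, 0 < f t)
    (hg : ∀ t ∈ s, 0 < g t) (hF : 0 < ∑ t ∈ s, f t) (hG : 0 < ∑ t ∈ s, g t) :
    ∑ t ∈ s, f t * Real.log (g t / f t) ≤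
      (∑ t ∈ s, f t) * Real.log ((∑ t ∈ s, g t) / (∑ t ∈ s, f t)) := by
  set F := ∑ t ∈ s, f t with hFdef
  set G := ∑ t ∈ s, g t with hGdef
  have key : ∀ t ∈ s, f t * Real.log (g t / f t) ≤
      F / G * g t - f t + f t * Real.log (G / F) := by
    intro t ht
    have hft := hf t ht
    have hgt := hg t ht
    have h1 : g t / f t = (F * g t / (G * f t)) * (G / F) := by
      field_simp
    rw [h1, Real.log_mul (by positivity) (by positivity), mul_add]
    have h2 : Real.log (F * g t / (G * f t)) ≤ F * g t / (G * f t) - 1 :=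
      Real.log_le_sub_one_of_pos (by positivity)
    have h3 : f t * Real.log (F * g t / (G * f t)) ≤ F / G * g t - f t := by
      calc f t * Real.log (F * g t / (G * f t)) ≤ f t * (F * g t / (G * f t) - 1) :=
            mul_le_mul_of_nonneg_left h2 hft.le
        _ = F / G * g t - f t := by field_simp
    linarith
  calc ∑ t ∈ s, f t * Real.log (g t / f t)
      ≤ ∑ t ∈ s, (F / G * g t - f t + f t * Real.log (G / F)) := Finset.sum_le_sum key
    _ = (F / G * G - F) + F * Real.log (G / F) := by
        rw [Finset.sum_add_distrib, Finset.sum_sub_distrib, ← Finset.mul_sum,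
          ← Finset.sum_mul, ← hFdef, ← hGdef]
    _ = F * Real.log (G / F) := by field_simp; ring
  
/-- Entropy in terms of `∑ f log f`. -/
lemma pentropy_formula (s : Finset ℕ) (f : ℕ → ℝ) (hf : ∀ t ∈ s, 0 < f t)
    (hF : 0 < ∑ t ∈ s, f t) :
    pentropyOn s f =
      Real.log (∑ t ∈ s, f t) - (∑ t ∈ s, f t * Real.log (f t)) / (∑ t ∈ s, f t) := by
  unfold pentropyOn
  set F := ∑ t ∈ s, f t with hFdef
  have h : ∀ t ∈ s, f t / F * Real.log (f t / F)
      = (f t * Real.log (f t) - f t * Real.log F) / F := by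
    intro t ht
    rw [Real.log_div (hf t ht).ne' hF.ne']
    ring
  rw [Finset.sum_congr rfl h, ← Finset.sum_div, Finset.sum_sub_distrib, ← Finset.sum_mul,
    ← hFdef]
  field_simp
  ring

/-- Key comparison: if the cross term and self term both equal `log c` after
normalization, entropy increases. -/
lemma pentropy_le_of_log_eq (s : Finset ℕ) (f g : ℕ → ℝ) (c : ℝ)
    (hf : ∀ t ∈ s, 0 < f t) (hg : ∀ t ∈ s, 0 < g t)
    (hF : 0 < ∑ t ∈ s, f t) (hG : 0 < ∑ t ∈ s, g t)
    (hcross : ∑ t ∈ s, f t * Real.log (g t) = (∑ t ∈ s, f t) * Real.log c)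
    (hself : ∑ t ∈ s, g t * Real.log (g t) = (∑ t ∈ s, g t) * Real.log c) :
    pentropyOn s f ≤ pentropyOn s g := by
  set F := ∑ t ∈ s, f t with hFdef
  set G := ∑ t ∈ s, g t with hGdef
  have hgibbs := gibbs_aux s f g hf hg hF hG
  have hsplit : ∀ t ∈ s, f t * Real.log (g t / f t)
      = f t * Real.log (g t) - f t * Real.log (f t) := by
    intro t ht
    rw [Real.log_div (hg t ht).ne' (hf t ht).ne']
    ring
  rw [Finset.sum_congr rfl hsplit, Finset.sum_sub_distrib,
    Real.log_div hG.ne' hF.ne', hcross] at hgibbs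
  -- hgibbs : F * log c - ∑ f log f ≤ F * (log G - log F)
  have hFf : Real.log c - Real.log G + Real.log F ≤ (∑ t ∈ s, f t * Real.log (f t)) / F := by
    rw [le_div_iff₀ hF]
    nlinarith [hgibbs]
  rw [pentropy_formula s f hf hF, pentropy_formula s g hg hG, ← hFdef, ← hGdef,
    hself, mul_div_cancel_left₀ _ hG.ne']
  linarith
  
/-- Bars are indexed by `1,…,n`, in decreasing order.  `L'(i)` replaces the
first `i-1` bars by copies of `Sᵢ / e^{Hᵢ}`, where `Sᵢ` and `Hᵢ` are the sum
and entropy of the tail `(ℓᵢ,…,ℓₙ)`. -/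
theorem entropy_le_replaced (n : ℕ) (ℓ : ℕ → ℝ)
    (hpos : ∀ t ∈ Finset.Icc 1 n, 0 < ℓ t)
    (hdec : ∀ s ∈ Finset.Icc 1 n, ∀ t ∈ Finset.Icc 1 n, s ≤ t → ℓ t ≤ ℓ s)
    (i : ℕ) (hi1 : 1 ≤ i) (hin : i ≤ n) :
    pentropyOn (Finset.Icc 1 n) ℓ ≤
      pentropyOn (Finset.Icc 1 n)
        (fun t => if t < i then
            (∑ j ∈ Finset.Icc i n, ℓ j) / Real.exp (pentropyOn (Finset.Icc i n) ℓ)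
          else ℓ t) := by
  set S := ∑ j ∈ Finset.Icc i n, ℓ j with hSdef
  set H := pentropyOn (Finset.Icc i n) ℓ with hHdef
  set c : ℝ := S / Real.exp H with hcdef
  set g : ℕ → ℝ := fun t => if t < i then c else ℓ t with hgdef
  have htail_sub : Finset.Icc i n ⊆ Finset.Icc 1 n := by
    intro t ht
    simp only [Finset.mem_Icc] at ht ⊢
    omega
  have htailpos : ∀ t ∈ Finset.Icc i n, 0 < ℓ t := fun t ht => hpos t (htail_sub ht)
  have hS : 0 < S := Finset.sum_pos htailpos ⟨i, by simp [Finset.mem_Icc, hin]⟩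
  have hc : 0 < c := div_pos hS (Real.exp_pos _)
  have hgpos : ∀ t ∈ Finset.Icc 1 n, 0 < g t := by
    intro t ht
    by_cases h : t < i <;> simp [hgdef, h]
    exacts [hc, hpos t ht]
  have hF : 0 < ∑ t ∈ Finset.Icc 1 n, ℓ t :=
    Finset.sum_pos hpos ⟨1, by simp [Finset.mem_Icc]; omega⟩
  have hG : 0 < ∑ t ∈ Finset.Icc 1 n, g t :=
    Finset.sum_pos hgpos ⟨1, by simp [Finset.mem_Icc]; omega⟩
  -- the tail identity: ∑_{Icc i n} ℓ log ℓ = S log c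
  have hlogc : Real.log c = Real.log S - H := by
    rw [hcdef, Real.log_div hS.ne' (Real.exp_pos _).ne', Real.log_exp]
  have htail : ∑ t ∈ Finset.Icc i n, ℓ t * Real.log (ℓ t) = S * Real.log c := by
    have := pentropy_formula (Finset.Icc i n) ℓ htailpos hS
    rw [← hSdef, ← hHdef] at this
    have h2 : (∑ t ∈ Finset.Icc i n, ℓ t * Real.log (ℓ t)) / S = Real.log S - H := by
      linarith
    rw [hlogc]
    field_simp at h2
    linarith
  -- split Icc 1 n by (· < i)
  have hfilter_not : (Finset.Icc 1 n).filter (fun t => ¬ t < i) = Finset.Icc i n := by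
    ext t
    simp only [Finset.mem_filter, Finset.mem_Icc, not_lt]
    omega
  have hsum_split : ∀ h : ℕ → ℝ, ∑ t ∈ Finset.Icc 1 n, h t =
      (∑ t ∈ (Finset.Icc 1 n).filter (fun t => t < i), h t) + ∑ t ∈ Finset.Icc i n, h t := by
    intro h
    rw [← hfilter_not, Finset.sum_filter_add_sum_filter_not]
  have hmemlt : ∀ t ∈ (Finset.Icc 1 n).filter (fun t => t < i), g t = c := by
    intro t ht
    simp only [Finset.mem_filter] at ht
    simp [hgdef, ht.2]
  -- cross identity
  have hcross : ∑ t ∈ Finset.Icc 1 n, ℓ t * Real.log (g t)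
      = (∑ t ∈ Finset.Icc 1 n, ℓ t) * Real.log c := by
    rw [hsum_split (fun t => ℓ t * Real.log (g t)), hsum_split ℓ]
    have h1 : ∑ t ∈ (Finset.Icc 1 n).filter (fun t => t < i), ℓ t * Real.log (g t)
        = (∑ t ∈ (Finset.Icc 1 n).filter (fun t => t < i), ℓ t) * Real.log c := by
      rw [Finset.sum_mul]
      refine Finset.sum_congr rfl fun t ht => ?_
      rw [hmemlt t ht]
    have h2 : ∑ t ∈ Finset.Icc i n, ℓ t * Real.log (g t)
        = ∑ t ∈ Finset.Icc i n, ℓ t * Real.log (ℓ t) := by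
      refine Finset.sum_congr rfl fun t ht => ?_
      have : ¬ t < i := by simp only [Finset.mem_Icc] at ht; omega
      simp [hgdef, this]
    rw [h1, h2, htail]
    ring
  -- self identity
  have hself : ∑ t ∈ Finset.Icc 1 n, g t * Real.log (g t)
      = (∑ t ∈ Finset.Icc 1 n, g t) * Real.log c := by
    rw [hsum_split (fun t => g t * Real.log (g t)), hsum_split g]
    have h1 : ∑ t ∈ (Finset.Icc 1 n).filter (fun t => t < i), g t * Real.log (g t)
        = (∑ t ∈ (Finset.Icc 1 n).filter (fun t => t < i), g t) * Real.log c := by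
      rw [Finset.sum_mul]
      refine Finset.sum_congr rfl fun t ht => ?_
      rw [hmemlt t ht]
    have h2 : ∑ t ∈ Finset.Icc i n, g t * Real.log (g t)
        = ∑ t ∈ Finset.Icc i n, ℓ t * Real.log (ℓ t) := by
      refine Finset.sum_congr rfl fun t ht => ?_
      have hnot : ¬ t < i := by simp only [Finset.mem_Icc] at ht; omega
      simp [hgdef, hnot]
    have h3 : ∑ t ∈ Finset.Icc i n, g t = S := by
      rw [hSdef]
      refine Finset.sum_congr rfl fun t ht => ?_
      have hnot : ¬ t < i := by simp only [Finset.mem_Icc] at ht; omega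
      simp [hgdef, hnot]
    rw [h1, h2, h3, htail]
    ring
  exact pentropy_le_of_log_eq (Finset.Icc 1 n) ℓ g c hpos hgpos hF hG hcross hself
end

section
/- Critical point identity: with M = (x₁,…,x_{i-1}, ℓᵢ,…,ℓₙ), x_k > 0, S_x = ∑_{j<i} x_j, Sᵢ = ∑_{j≥i} ℓⱼ, Hᵢ the entropy of the tail, the partial derivative of H(M) with respect to x_k equals (1/(S_x+Sᵢ)²)·(−Sᵢ Hᵢ + Sᵢ log(Sᵢ/x_k) + ∑_{j≠k, j<i} x_j log(x_j/x_k)). -/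
open Finset

lemma pentropy_eq {ι : Type*} [Fintype ι] [Nonempty ι] (f : ι → ℝ) (hf : ∀ i, 0 < f i) :
    pentropy f = Real.log (∑ i, f i) - (∑ i, f i * Real.log (f i)) / (∑ i, f i) := by
  have hT : 0 < ∑ i, f i := Finset.sum_pos (fun i _ => hf i) univ_nonempty
  unfold pentropy
  have h : ∀ i ∈ Finset.univ, (f i / ∑ j, f j) * Real.log (f i / ∑ j, f j)
      = (f i * Real.log (f i)) / (∑ j, f j) - (f i / ∑ j, f j) * Real.log (∑ j, f j) := by
    intro i _
    rw [Real.log_div (ne_of_gt (hf i)) (ne_of_gt hT)]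
    ring
  rw [Finset.sum_congr rfl h, Finset.sum_sub_distrib, ← Finset.sum_div, ← Finset.sum_mul,
    ← Finset.sum_div, div_self (ne_of_gt hT), one_mul]
  ring

/-- `m` plays the role of `i-1`: the free bars are `x : Fin m → ℝ`, the fixed
tail is `ℓ : Fin k → ℝ` (nonempty since `i ≤ n`).  The partial derivative of
`H(M)` with respect to `x k'` is the stated expression. -/
theorem partial_derivative_of_entropy (m k : ℕ) (hk : 0 < k)
    (ℓ : Fin k → ℝ) (hℓ : ∀ j, 0 < ℓ j)
    (x : Fin m → ℝ) (hx : ∀ j, 0 < x j) (k' : Fin m) :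
    HasDerivAt (fun y : ℝ => pentropy (Sum.elim (Function.update x k' y) ℓ))
      ((1 / ((∑ j, x j) + ∑ j, ℓ j) ^ 2) *
        (-((∑ j, ℓ j) * pentropy ℓ) +
          (∑ j, ℓ j) * Real.log ((∑ j, ℓ j) / x k') +
          ∑ j ∈ Finset.univ.erase k', x j * Real.log (x j / x k')))
      (x k') := by
  haveI : Nonempty (Fin k) := ⟨⟨0, hk⟩⟩
  haveI : Nonempty (Fin m ⊕ Fin k) := ⟨Sum.inr ⟨0, hk⟩⟩
  set a := x k' with ha
  have hapos : 0 < a := hx k'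
  set SL := ∑ j, ℓ j with hSL
  have hSLpos : 0 < SL := Finset.sum_pos (fun j _ => hℓ j) univ_nonempty
  set s := ∑ j ∈ univ.erase k', x j with hs
  have hsnn : 0 ≤ s := Finset.sum_nonneg fun j _ => (hx j).le
  set c := s + SL with hc
  have hxsum : ∑ j, x j = s + a := by
    rw [hs, Finset.sum_erase_add univ x (mem_univ k')]
  have htpos : 0 < c + a := by positivity
  set Lℓ := ∑ j, ℓ j * Real.log (ℓ j) with hLℓ
  set b := (∑ j ∈ univ.erase k', x j * Real.log (x j)) + Lℓ with hb
  -- the total sum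
  have hsum : ∀ y : ℝ, (∑ i, Sum.elim (Function.update x k' y) ℓ i) = c + y := by
    intro y
    rw [Fintype.sum_sum_type]
    simp only [Sum.elim_inl, Sum.elim_inr]
    rw [Finset.sum_update_of_mem (mem_univ k'), hc, hs, ← hSL,
      Finset.sdiff_singleton_eq_erase]
    ring
  have hflog : ∀ y : ℝ, 0 < y →
      (∑ i, Sum.elim (Function.update x k' y) ℓ i
        * Real.log (Sum.elim (Function.update x k' y) ℓ i)) = b + y * Real.log y := by
    intro y hy
    rw [Fintype.sum_sum_type]
    simp only [Sum.elim_inl, Sum.elim_inr]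
    have : ∑ j, Function.update x k' y j * Real.log (Function.update x k' y j)
        = (∑ j ∈ univ.erase k', x j * Real.log (x j)) + y * Real.log y := by
      rw [← Finset.sum_erase_add univ _ (mem_univ k'), Function.update_self]
      congr 1
      exact Finset.sum_congr rfl fun j hj =>
        by rw [Function.update_of_ne (Finset.ne_of_mem_erase hj)]
    rw [this, hb, ← hLℓ]
    ring
  -- pointwise formula near `a`
  have key : ∀ y : ℝ, 0 < y →
      pentropy (Sum.elim (Function.update x k' y) ℓ)
        = Real.log (c + y) - (b + y * Real.log y) / (c + y) := by
    intro y hy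
    have hpos : ∀ i, 0 < Sum.elim (Function.update x k' y) ℓ i := by
      rintro (j | j)
      · rcases eq_or_ne j k' with rfl | hne
        · simpa using hy
        · simpa [Function.update_of_ne hne] using hx j
      · exact hℓ j
    rw [pentropy_eq _ hpos, hsum y, hflog y hy]
  -- the closed-form function and its derivative
  have hne : c + a ≠ 0 := ne_of_gt htpos
  have h1 : HasDerivAt (fun y : ℝ => c + y) 1 a := (hasDerivAt_id a).const_add c
  have hlog : HasDerivAt (fun y : ℝ => Real.log (c + y)) (1 / (c + a)) a := by
    simpa using h1.log hne
  have h2 : HasDerivAt (fun y : ℝ => y * Real.log y) (Real.log a + 1) a :=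
    Real.hasDerivAt_mul_log (ne_of_gt hapos)
  have h3 : HasDerivAt (fun y : ℝ => (b + y * Real.log y) / (c + y))
      (((Real.log a + 1) * (c + a) - (b + a * Real.log a) * 1) / (c + a) ^ 2) a :=
    (h2.const_add b).div h1 hne
  have hg : HasDerivAt (fun y : ℝ => Real.log (c + y) - (b + y * Real.log y) / (c + y))
      (1 / (c + a) - ((Real.log a + 1) * (c + a) - (b + a * Real.log a) * 1) / (c + a) ^ 2) a :=
    hlog.sub h3
  have hev : (fun y : ℝ => pentropy (Sum.elim (Function.update x k' y) ℓ))
      =ᶠ[nhds a] (fun y : ℝ => Real.log (c + y) - (b + y * Real.log y) / (c + y)) :=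
    (eventually_gt_nhds hapos).mono fun y hy => key y hy
  have hmain := hg.congr_of_eventuallyEq hev
  refine hmain.congr_deriv ?_
  symm
  -- now the algebra
  rw [pentropy_eq ℓ hℓ, ← hSL, ← hLℓ, hxsum,
    Real.log_div (ne_of_gt hSLpos) (ne_of_gt hapos)]
  have hsum2 : ∑ j ∈ univ.erase k', x j * Real.log (x j / a)
      = (∑ j ∈ univ.erase k', x j * Real.log (x j)) - s * Real.log a := by
    rw [hs, Finset.sum_mul, ← Finset.sum_sub_distrib]
    exact Finset.sum_congr rfl fun j _ => by
      rw [Real.log_div (ne_of_gt (hx j)) (ne_of_gt hapos)]; ring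
  rw [hsum2, hb, hc]
  have h0 : s + SL + a ≠ 0 := by positivity
  field_simp
  ring
end

section
/- For a finite set V of points in the plane ℝ², the Vietoris–Rips complex at scale r is contained in the Čech complex at scale √2·r: VR_r(V) ⊆ Č_{√2 r}(V). -/
/-- Vietoris–Rips ⊆ Čech at scale `√2·r` in the plane: if all pairwise
distances in `S` are at most `r`, then the closed balls of radius
`(√2·r)/2` around the points of `S` have a common point. -/
theorem rips_subset_cech_plane (V : Finset (EuclideanSpace ℝ (Fin 2)))
    (r : ℝ) (S : Finset (EuclideanSpace ℝ (Fin 2))) (hSV : S ⊆ V)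
    (hS : S.Nonempty)
    (h : ∀ u ∈ S, ∀ v ∈ S, dist u v ≤ r) :
    ∃ p : EuclideanSpace ℝ (Fin 2), ∀ v ∈ S, dist v p ≤ Real.sqrt 2 * r / 2 := by
  obtain ⟨x₀, hx₀⟩ := hS
  have hr : 0 ≤ r := le_trans dist_nonneg (h x₀ hx₀ x₀ hx₀)
  set p : EuclideanSpace ℝ (Fin 2) :=
    WithLp.toLp 2 (fun i => (S.inf' ⟨x₀, hx₀⟩ (fun v => v i) + S.sup' ⟨x₀, hx₀⟩ (fun v => v i)) / 2) with hp
  refine ⟨p, fun v hv => ?_⟩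
  -- coordinatewise bound
  have key : ∀ i, dist (v i) (p i) ≤ r / 2 := by
    intro i
    obtain ⟨a, ha, hae⟩ := S.exists_mem_eq_inf' ⟨x₀, hx₀⟩ (fun v => v i)
    obtain ⟨b, hb, hbe⟩ := S.exists_mem_eq_sup' ⟨x₀, hx₀⟩ (fun v => v i)
    have hinf : S.inf' ⟨x₀, hx₀⟩ (fun v => v i) ≤ v i := Finset.inf'_le _ hv
    have hsup : v i ≤ S.sup' ⟨x₀, hx₀⟩ (fun v => v i) := Finset.le_sup' (fun v => v i) hv
    have hab : b i - a i ≤ r := by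
      have h1 : |b i - a i| ≤ dist b a := by
        rw [EuclideanSpace.dist_eq]
        calc |b i - a i| = Real.sqrt (dist (b i) (a i) ^ 2) := by
              rw [Real.sqrt_sq dist_nonneg, Real.dist_eq]
          _ ≤ Real.sqrt (∑ j, dist (b j) (a j) ^ 2) := by
              exact Real.sqrt_le_sqrt (Finset.single_le_sum
                (f := fun j => dist (b j) (a j) ^ 2)
                (fun j _ => sq_nonneg _) (Finset.mem_univ i))
      calc b i - a i ≤ |b i - a i| := le_abs_self _
        _ ≤ dist b a := h1
        _ ≤ r := h b hb a ha
    rw [Real.dist_eq, abs_le]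
    constructor
    · have : v i ≤ b i := hbe ▸ hsup
      simp only [hp]
      have : v i - (a i + b i) / 2 ≤ (b i - a i) / 2 := by
        have := hbe ▸ hsup; linarith
      rw [← hae, ← hbe] at *
      linarith
    · have : a i ≤ v i := hae ▸ hinf
      simp only [hp]
      rw [← hae, ← hbe] at *
      linarith
  have hdist : dist v p = Real.sqrt (∑ i, dist (v i) (p i) ^ 2) :=
    EuclideanSpace.dist_eq v p
  rw [hdist]
  have hsum : (∑ i, dist (v i) (p i) ^ 2) ≤ 2 * (r / 2) ^ 2 := by
    have : ∀ i : Fin 2, dist (v i) (p i) ^ 2 ≤ (r / 2) ^ 2 := fun i =>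
      pow_le_pow_left₀ dist_nonneg (key i) 2
    calc (∑ i, dist (v i) (p i) ^ 2) ≤ ∑ _i : Fin 2, (r / 2) ^ 2 :=
          Finset.sum_le_sum (fun i _ => this i)
      _ = 2 * (r / 2) ^ 2 := by rw [Fin.sum_univ_two]; ring
  calc Real.sqrt (∑ i, dist (v i) (p i) ^ 2) ≤ Real.sqrt (2 * (r / 2) ^ 2) :=
        Real.sqrt_le_sqrt hsum
    _ = Real.sqrt 2 * (r / 2) := by
        rw [Real.sqrt_mul (by norm_num), Real.sqrt_sq (by linarith)]
    _ = Real.sqrt 2 * r / 2 := by ring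
end

section
/- Strict monotonicity of the replacement entropies: with ℓ₁ ≥ ⋯ ≥ ℓₙ > 0 not all equal, and L'(i) defined by replacing the first i−1 bars by copies of Sᵢ/e^{Hᵢ}, if ℓ_{i} > ℓ_{j} for some i < j ≤ n then H(L'(i)) < H(L'(j)) for those indices i < j. -/
open Finset

lemma pentropyOn_eq (s : Finset ℕ) (f : ℕ → ℝ) (hf : ∀ t ∈ s, 0 < f t)
    (hs : s.Nonempty) :
    pentropyOn s f = Real.log (∑ j ∈ s, f j)
      - (∑ j ∈ s, f j * Real.log (f j)) / ∑ j ∈ s, f j := by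
  have hS : 0 < ∑ j ∈ s, f j := Finset.sum_pos hf hs
  unfold pentropyOn
  have h1 : ∀ t ∈ s, (f t / ∑ j ∈ s, f j) * Real.log (f t / ∑ j ∈ s, f j)
      = (f t * Real.log (f t)) / (∑ j ∈ s, f j)
        - (f t / ∑ j ∈ s, f j) * Real.log (∑ j ∈ s, f j) := by
    intro t ht
    rw [Real.log_div (hf t ht).ne' hS.ne']
    ring
  rw [Finset.sum_congr rfl h1, Finset.sum_sub_distrib, ← Finset.sum_div,
    ← Finset.sum_mul, ← Finset.sum_div, div_self hS.ne', one_mul]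
  ring

lemma replaced_entropy (n : ℕ) (ℓ : ℕ → ℝ) (hpos : ∀ t ∈ Finset.Icc 1 n, 0 < ℓ t)
    (i : ℕ) (hi1 : 1 ≤ i) (hin : i ≤ n) :
    pentropyOn (Finset.Icc 1 n)
      (fun t => if t < i then
          (∑ u ∈ Finset.Icc i n, ℓ u) / Real.exp (pentropyOn (Finset.Icc i n) ℓ)
        else ℓ t)
    = Real.log ((i - 1 : ℝ) + Real.exp (pentropyOn (Finset.Icc i n) ℓ)) := by
  set S := ∑ u ∈ Finset.Icc i n, ℓ u with hSdef
  set A := ∑ u ∈ Finset.Icc i n, ℓ u * Real.log (ℓ u) with hAdef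
  have htail : ∀ t ∈ Finset.Icc i n, 0 < ℓ t := fun t ht => by
    refine hpos t ?_
    simp only [Finset.mem_Icc] at *
    omega
  have hne : (Finset.Icc i n).Nonempty := ⟨i, by simp [Finset.mem_Icc, hin]⟩
  have hS : 0 < S := Finset.sum_pos htail hne
  have hH : pentropyOn (Finset.Icc i n) ℓ = Real.log S - A / S :=
    pentropyOn_eq _ _ htail hne
  have hexpH : Real.exp (pentropyOn (Finset.Icc i n) ℓ) = S * Real.exp (-(A / S)) := by
    rw [hH, Real.exp_sub, Real.exp_log hS, Real.exp_neg]
    ring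
  set c := S / Real.exp (pentropyOn (Finset.Icc i n) ℓ) with hcdef
  have hc : c = Real.exp (A / S) := by
    rw [hcdef, hexpH, Real.exp_neg, div_mul_eq_div_div, div_self hS.ne', one_div, inv_inv]
  have hcpos : 0 < c := by rw [hc]; exact Real.exp_pos _
  have hlogc : Real.log c = A / S := by rw [hc, Real.log_exp]
  -- split the index set
  have hsplit : Finset.Icc 1 n = Finset.Ico 1 i ∪ Finset.Icc i n := by
    ext t; simp only [Finset.mem_Icc, Finset.mem_union, Finset.mem_Ico]; omega
  have hdisj : Disjoint (Finset.Ico 1 i) (Finset.Icc i n) := by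
    rw [Finset.disjoint_left]
    intro t ht ht'
    simp only [Finset.mem_Icc, Finset.mem_Ico] at *
    omega
  set f : ℕ → ℝ := fun t => if t < i then c else ℓ t with hfdef
  have hfIco : ∀ t ∈ Finset.Ico 1 i, f t = c := by
    intro t ht; simp only [Finset.mem_Ico] at ht; simp [hfdef, ht.2]
  have hfIcc : ∀ t ∈ Finset.Icc i n, f t = ℓ t := by
    intro t ht; simp only [Finset.mem_Icc] at ht
    simp [hfdef, Nat.not_lt.2 ht.1]
  have hcard : ((Finset.Ico 1 i).card : ℝ) = (i : ℝ) - 1 := by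
    rw [Nat.card_Ico]
    push_cast [Nat.cast_sub hi1]
    ring
  have hsum1 : ∑ t ∈ Finset.Icc 1 n, f t = ((i : ℝ) - 1) * c + S := by
    rw [hsplit, Finset.sum_union hdisj, Finset.sum_congr rfl hfIco,
      Finset.sum_congr rfl hfIcc, Finset.sum_const, nsmul_eq_mul, hcard]
  have hsum2 : ∑ t ∈ Finset.Icc 1 n, f t * Real.log (f t)
      = ((i : ℝ) - 1) * (c * Real.log c) + A := by
    rw [hsplit, Finset.sum_union hdisj]
    congr 1
    · rw [Finset.sum_congr rfl (fun t ht => by rw [hfIco t ht]), Finset.sum_const,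
        nsmul_eq_mul, hcard]
    · exact Finset.sum_congr rfl (fun t ht => by rw [hfIcc t ht])
  have hi1R : (0:ℝ) ≤ (i:ℝ) - 1 := by
    have : (1:ℝ) ≤ (i:ℝ) := by exact_mod_cast hi1
    linarith
  have hT : 0 < ((i : ℝ) - 1) * c + S := by positivity
  have hfpos : ∀ t ∈ Finset.Icc 1 n, 0 < f t := by
    intro t ht
    by_cases h : t < i
    · simpa [hfdef, h] using hcpos
    · simpa [hfdef, h] using hpos t ht
  have hne1 : (Finset.Icc 1 n).Nonempty := ⟨1, by simp [Finset.mem_Icc]; omega⟩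
  rw [pentropyOn_eq _ _ hfpos hne1, hsum1, hsum2]
  have hnum : ((i : ℝ) - 1) * (c * Real.log c) + A = (((i:ℝ) - 1) * c + S) * (A / S) := by
    rw [hlogc]; field_simp
  rw [hnum, mul_div_cancel_left₀ _ hT.ne']
  have hEH : Real.exp (pentropyOn (Finset.Icc i n) ℓ) = S / c := by
    rw [hcdef]; field_simp
  rw [hEH]
  have harg : (i : ℝ) - 1 + S / c = (((i:ℝ) - 1) * c + S) / c := by
    field_simp
  rw [harg, Real.log_div hT.ne' hcpos.ne', hlogc]

lemma phi_deriv (S' A' : ℝ) (hS : 0 < S') {x : ℝ} (hx : 0 < x) :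
    HasDerivAt (fun t : ℝ => Real.log (t + S') - (t * Real.log t + A') / (t + S'))
      ((A' - S' * Real.log x) / (x + S') ^ 2) x := by
  have hxS : 0 < x + S' := by linarith
  have h1 : HasDerivAt (fun t : ℝ => t + S') 1 x := (hasDerivAt_id x).add_const S'
  have hlog : HasDerivAt (fun t : ℝ => Real.log (t + S')) (1 / (x + S')) x := h1.log hxS.ne'
  have hmul : HasDerivAt (fun t : ℝ => t * Real.log t) (Real.log x + 1) x := by
    have := (hasDerivAt_id x).fun_mul (Real.hasDerivAt_log hx.ne')
    simpa [mul_inv_cancel₀ hx.ne', add_comm] using this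
  have hnum : HasDerivAt (fun t : ℝ => t * Real.log t + A') (Real.log x + 1) x :=
    hmul.add_const A'
  have hq := hnum.fun_div h1 hxS.ne'
  have := hlog.fun_sub hq
  refine this.congr_deriv ?_
  field_simp
  ring

lemma phi_strictAntiOn (S' A' : ℝ) (hS : 0 < S') :
    StrictAntiOn (fun t : ℝ => Real.log (t + S') - (t * Real.log t + A') / (t + S'))
      (Set.Ici (Real.exp (A' / S'))) := by
  set c := Real.exp (A' / S') with hc
  have hcpos : 0 < c := Real.exp_pos _
  apply strictAntiOn_of_deriv_neg (convex_Ici c)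
  · intro x hx
    have hxpos : 0 < x := lt_of_lt_of_le hcpos hx
    exact ((phi_deriv S' A' hS hxpos).continuousAt).continuousWithinAt
  · intro x hx
    rw [interior_Ici] at hx
    have hxpos : 0 < x := lt_trans hcpos hx
    rw [(phi_deriv S' A' hS hxpos).deriv]
    have hlogx : A' / S' < Real.log x := by
      rw [← Real.log_exp (A' / S'), ← hc]
      exact Real.log_lt_log hcpos hx
    have h1 : A' - S' * Real.log x < 0 := by
      rw [div_lt_iff₀ hS] at hlogx
      linarith
    have h2 : 0 < (x + S') ^ 2 := by positivity
    exact div_neg_of_neg_of_pos h1 h2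

lemma phi_val (S' A' : ℝ) (hS : 0 < S') :
    Real.log (Real.exp (A' / S') + S')
        - (Real.exp (A' / S') * Real.log (Real.exp (A' / S')) + A') / (Real.exp (A' / S') + S')
      = Real.log (Real.exp (A' / S') + S') - A' / S' := by
  set c := Real.exp (A' / S') with hc
  have hcpos : 0 < c := Real.exp_pos _
  have h : c * Real.log c + A' = (c + S') * (A' / S') := by
    rw [hc, Real.log_exp]; field_simp
  rw [h, mul_div_cancel_left₀ _ (by positivity : (0:ℝ) < c + S').ne']

lemma phi_le (S' A' x : ℝ) (hS : 0 < S') (hx : Real.exp (A' / S') ≤ x) :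
    Real.log (x + S') - (x * Real.log x + A') / (x + S')
      ≤ Real.log (Real.exp (A' / S') + S') - A' / S' := by
  rcases eq_or_lt_of_le hx with h | h
  · rw [← h, ← phi_val S' A' hS]
  · rw [← phi_val S' A' hS]
    exact le_of_lt (phi_strictAntiOn S' A' hS Set.self_mem_Ici (le_of_lt h) h)

lemma phi_lt (S' A' x : ℝ) (hS : 0 < S') (hx : Real.exp (A' / S') < x) :
    Real.log (x + S') - (x * Real.log x + A') / (x + S')
      < Real.log (Real.exp (A' / S') + S') - A' / S' := by
  rw [← phi_val S' A' hS]
  exact phi_strictAntiOn S' A' hS Set.self_mem_Ici (le_of_lt hx) hx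

lemma exp_step (n : ℕ) (ℓ : ℕ → ℝ) (hpos : ∀ t ∈ Finset.Icc 1 n, 0 < ℓ t)
    (hdec : ∀ s ∈ Finset.Icc 1 n, ∀ t ∈ Finset.Icc 1 n, s ≤ t → ℓ t ≤ ℓ s)
    (k : ℕ) (hk1 : 1 ≤ k) (hkn : k + 1 ≤ n) :
    Real.exp (pentropyOn (Finset.Icc k n) ℓ)
      ≤ 1 + Real.exp (pentropyOn (Finset.Icc (k+1) n) ℓ) ∧
    (ℓ (k+1) < ℓ k →
      Real.exp (pentropyOn (Finset.Icc k n) ℓ)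
        < 1 + Real.exp (pentropyOn (Finset.Icc (k+1) n) ℓ)) := by
  set S' := ∑ u ∈ Finset.Icc (k+1) n, ℓ u with hS'def
  set A' := ∑ u ∈ Finset.Icc (k+1) n, ℓ u * Real.log (ℓ u) with hA'def
  have hmemIcc : ∀ t, k ≤ t → t ≤ n → t ∈ Finset.Icc 1 n := by
    intro t h1 h2; simp only [Finset.mem_Icc]; omega
  have htail' : ∀ t ∈ Finset.Icc (k+1) n, 0 < ℓ t := fun t ht => by
    simp only [Finset.mem_Icc] at ht; exact hpos t (hmemIcc t (by omega) ht.2)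
  have hne' : (Finset.Icc (k+1) n).Nonempty := ⟨k+1, by simp [Finset.mem_Icc, hkn]⟩
  have hS' : 0 < S' := Finset.sum_pos htail' hne'
  have hH' : pentropyOn (Finset.Icc (k+1) n) ℓ = Real.log S' - A' / S' :=
    pentropyOn_eq _ _ htail' hne'
  set c := Real.exp (A' / S') with hcdef
  have hcpos : 0 < c := Real.exp_pos _
  have hexpH' : Real.exp (pentropyOn (Finset.Icc (k+1) n) ℓ) = S' / c := by
    rw [hH', Real.exp_sub, Real.exp_log hS', hcdef]
  -- c ≤ ℓ (k+1)
  have hlk1pos : 0 < ℓ (k+1) := hpos _ (hmemIcc (k+1) (by omega) hkn)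
  have hkpos : 0 < ℓ k := hpos _ (hmemIcc k le_rfl (by omega))
  have hA'le : A' ≤ S' * Real.log (ℓ (k+1)) := by
    rw [hS'def, hA'def, Finset.sum_mul]
    apply Finset.sum_le_sum
    intro u hu
    simp only [Finset.mem_Icc] at hu
    have hupos : 0 < ℓ u := htail' u (by simp [Finset.mem_Icc]; omega)
    have hule : ℓ u ≤ ℓ (k+1) :=
      hdec (k+1) (hmemIcc (k+1) (by omega) hkn) u (hmemIcc u (by omega) hu.2) hu.1
    exact mul_le_mul_of_nonneg_left (Real.log_le_log hupos hule) hupos.le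
  have hcle : c ≤ ℓ (k+1) := by
    rw [hcdef, ← Real.exp_log hlk1pos]
    apply Real.exp_le_exp.2
    rw [div_le_iff₀ hS']
    linarith [hA'le]
  have hlk : ℓ (k+1) ≤ ℓ k :=
    hdec k (hmemIcc k le_rfl (by omega)) (k+1) (hmemIcc (k+1) (by omega) hkn) (by omega)
  have hclek : c ≤ ℓ k := hcle.trans hlk
  -- H k in phi form
  have hins : Finset.Icc k n = insert k (Finset.Icc (k+1) n) := by
    ext t; simp only [Finset.mem_Icc, Finset.mem_insert]; omega
  have hknotmem : k ∉ Finset.Icc (k+1) n := by simp [Finset.mem_Icc]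
  have htailk : ∀ t ∈ Finset.Icc k n, 0 < ℓ t := fun t ht => by
    simp only [Finset.mem_Icc] at ht; exact hpos t (hmemIcc t ht.1 ht.2)
  have hnek : (Finset.Icc k n).Nonempty := ⟨k, by simp [Finset.mem_Icc]; omega⟩
  have hsumk : ∑ u ∈ Finset.Icc k n, ℓ u = ℓ k + S' := by
    rw [hins, Finset.sum_insert hknotmem]
  have hsumk2 : ∑ u ∈ Finset.Icc k n, ℓ u * Real.log (ℓ u)
      = ℓ k * Real.log (ℓ k) + A' := by
    rw [hins, Finset.sum_insert hknotmem]
  have hHk : pentropyOn (Finset.Icc k n) ℓ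
      = Real.log (ℓ k + S') - (ℓ k * Real.log (ℓ k) + A') / (ℓ k + S') := by
    rw [pentropyOn_eq _ _ htailk hnek, hsumk, hsumk2]
  have hRHS : Real.exp (Real.log (c + S') - A' / S')
      = 1 + Real.exp (pentropyOn (Finset.Icc (k+1) n) ℓ) := by
    rw [Real.exp_sub, Real.exp_log (by positivity), hexpH', ← hcdef]
    field_simp
  constructor
  · rw [hHk, ← hRHS]
    exact Real.exp_le_exp.2 (phi_le S' A' (ℓ k) hS' hclek)
  · intro hlt
    have hcltk : c < ℓ k := lt_of_le_of_lt hcle hlt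
    rw [hHk, ← hRHS]
    exact Real.exp_lt_exp.2 (phi_lt S' A' (ℓ k) hS' hcltk)

lemma chain (n : ℕ) (ℓ : ℕ → ℝ) (hpos : ∀ t ∈ Finset.Icc 1 n, 0 < ℓ t)
    (hdec : ∀ s ∈ Finset.Icc 1 n, ∀ t ∈ Finset.Icc 1 n, s ≤ t → ℓ t ≤ ℓ s)
    (i : ℕ) (hi1 : 1 ≤ i) :
    ∀ j, i + 1 ≤ j → j ≤ n →
      Real.exp (pentropyOn (Finset.Icc i n) ℓ)
        ≤ ((j : ℝ) - i) + Real.exp (pentropyOn (Finset.Icc j n) ℓ) ∧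
      (ℓ j < ℓ i →
        Real.exp (pentropyOn (Finset.Icc i n) ℓ)
          < ((j : ℝ) - i) + Real.exp (pentropyOn (Finset.Icc j n) ℓ)) := by
  intro j hj
  induction j, hj using Nat.le_induction with
  | base =>
    intro hn
    have hstep := exp_step n ℓ hpos hdec i hi1 hn
    have h1 : ((i + 1 : ℕ) : ℝ) - (i : ℝ) = 1 := by push_cast; ring
    rw [h1]
    exact hstep
  | succ j hj IH =>
    intro hn
    have hjn : j ≤ n := by omega
    have IH' := IH hjn
    have hstep := exp_step n ℓ hpos hdec j (by omega) hn
    have hcast : ((j + 1 : ℕ) : ℝ) - (i : ℝ) = ((j : ℝ) - i) + 1 := by push_cast; ring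
    rw [hcast]
    constructor
    · linarith [IH'.1, hstep.1]
    · intro hlt
      by_cases h : ℓ j < ℓ i
      · linarith [IH'.2 h, hstep.1]
      · have h2 : ℓ (j+1) < ℓ j := lt_of_lt_of_le hlt (not_lt.1 h)
        linarith [IH'.1, hstep.2 h2]

/-- Bars indexed by `1,…,n` in decreasing order; `L'(i)` replaces the bars
before index `i` by copies of `Sᵢ/e^{Hᵢ}`.  If `ℓ i > ℓ j` for some
`i < j ≤ n` then `H(L'(i)) < H(L'(j))`. -/
theorem replaced_entropies_strict_mono (n : ℕ) (ℓ : ℕ → ℝ)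
    (hpos : ∀ t ∈ Finset.Icc 1 n, 0 < ℓ t)
    (hdec : ∀ s ∈ Finset.Icc 1 n, ∀ t ∈ Finset.Icc 1 n, s ≤ t → ℓ t ≤ ℓ s)
    (i j : ℕ) (hi1 : 1 ≤ i) (hij : i < j) (hjn : j ≤ n) (hstrict : ℓ j < ℓ i) :
    pentropyOn (Finset.Icc 1 n)
        (fun t => if t < i then
            (∑ u ∈ Finset.Icc i n, ℓ u) / Real.exp (pentropyOn (Finset.Icc i n) ℓ)
          else ℓ t) <
      pentropyOn (Finset.Icc 1 n)
        (fun t => if t < j then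
            (∑ u ∈ Finset.Icc j n, ℓ u) / Real.exp (pentropyOn (Finset.Icc j n) ℓ)
          else ℓ t) := by
  have hin : i ≤ n := by omega
  rw [replaced_entropy n ℓ hpos i hi1 hin, replaced_entropy n ℓ hpos j (by omega) hjn]
  have hch := (chain n ℓ hpos hdec i hi1 j hij hjn).2 hstrict
  have hiR : (1 : ℝ) ≤ (i : ℝ) := by exact_mod_cast hi1
  have hEi : 0 < Real.exp (pentropyOn (Finset.Icc i n) ℓ) := Real.exp_pos _
  apply Real.log_lt_log
  · linarith
  · linarith
end
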